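/- Let R = ℂ[x₀,…,x₄] and let l₀, l₁, l₂, l₃, l₄ be ℂ-linearly independent linear forms in R. Let M_a be the 6×6 skew-symmetric matrix over R with rows (0, l₃, 0, 0, l₀, l₁), (−l₃, 0, 0, −l₀, 0, l₂), (0, 0, 0, −l₁, −l₂, 0), (0, l₀, l₁, 0, l₄, 0), (−l₀, 0, l₂, −l₄, 0, 0), (−l₁, −l₂, 0, 0, 0, 0), and let S_aᵀ be the 2×6 matrix with rows (l₂, −l₁, l₀, 0, 0, l₃) and (0, 0, l₄, l₂, −l₁, l₀). Then the kernel of the R-linear map R⁶ → R² given by v ↦ S_aᵀ·v equals the R-submodule of R⁶ generated by the six columns of M_a. -/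

import Mathlib

open MvPolynomial Matrix

namespace Stmt12Aux

abbrev R5 : Type := MvPolynomial (Fin 5) ℂ

lemma divX (i : Fin 5) (F : Fin 5 → R5) (hFi : F i = 0) (hF : ∀ j, j ≠ i → F j = X j)
    (p : R5) : ∃ q, p = X i * q + aeval F p := by
  induction p using MvPolynomial.induction_on with
  | C a => exact ⟨0, by simp⟩
  | add p q hp hq =>
      obtain ⟨qp, hp⟩ := hp; obtain ⟨qq, hq⟩ := hq
      exact ⟨qp + qq, by rw [map_add]; linear_combination hp + hq⟩
  | mul_X p j hp =>
      obtain ⟨q, hq⟩ := hp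
      rcases eq_or_ne j i with rfl | h
      · exact ⟨p, by rw [_root_.map_mul, aeval_X, hFi, mul_zero]; ring⟩
      · exact ⟨q * X j, by rw [_root_.map_mul, aeval_X, hF j h]; linear_combination (X j : R5) * hq⟩

lemma div2 (i₁ i₂ : Fin 5) (F : Fin 5 → R5) (hF1 : F i₁ = 0) (hF2 : F i₂ = 0)
    (hF : ∀ j, j ≠ i₁ → j ≠ i₂ → F j = X j)
    (p : R5) : ∃ q₁ q₂, p = X i₁ * q₁ + X i₂ * q₂ + aeval F p := by
  induction p using MvPolynomial.induction_on with
  | C a => exact ⟨0, 0, by simp⟩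
  | add p q hp hq =>
      obtain ⟨qp, qp', hp⟩ := hp; obtain ⟨qq, qq', hq⟩ := hq
      exact ⟨qp + qq, qp' + qq', by rw [map_add]; linear_combination hp + hq⟩
  | mul_X p j hp =>
      obtain ⟨q, q', hq⟩ := hp
      rcases eq_or_ne j i₁ with rfl | h1
      · exact ⟨p, 0, by rw [_root_.map_mul, aeval_X, hF1, mul_zero]; ring⟩
      rcases eq_or_ne j i₂ with rfl | h2
      · exact ⟨0, p, by rw [_root_.map_mul, aeval_X, hF2, mul_zero]; ring⟩
      · exact ⟨q * X j, q' * X j, by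
          rw [_root_.map_mul, aeval_X, hF j h1 h2]; linear_combination (X j : R5) * hq⟩

lemma cancelX (i : Fin 5) {p : R5} (h : X i * p = 0) : p = 0 :=
  (mul_eq_zero.mp h).resolve_left (X_ne_zero i)

lemma cs5 {α : Type*} (x : α) (u : Fin 5 → α) : Matrix.vecCons x u 5 = u 4 := rfl
lemma cs4 {α : Type*} (x : α) (u : Fin 4 → α) : Matrix.vecCons x u 4 = u 3 := rfl
lemma cs3 {α : Type*} (x : α) (u : Fin 3 → α) : Matrix.vecCons x u 3 = u 2 := rfl
lemma cs2 {α : Type*} (x : α) (u : Fin 2 → α) : Matrix.vecCons x u 2 = u 1 := rfl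
lemma cs1 {α : Type*} (x : α) (u : Fin 1 → α) : Matrix.vecCons x u 1 = u 0 := rfl

lemma v6_4 {α : Type*} (a b c d e f : α) : ![a, b, c, d, e, f] 4 = e := rfl
lemma v6_5 {α : Type*} (a b c d e f : α) : ![a, b, c, d, e, f] 5 = f := rfl
lemma v5_4 {α : Type*} (a b c d e : α) : ![a, b, c, d, e] 4 = e := rfl

end Stmt12Aux

namespace Stmt12Aux
open MvPolynomial

noncomputable abbrev F4v : Fin 5 → R5 := ![X 0, X 1, X 2, X 3, 0]
noncomputable abbrev F2v : Fin 5 → R5 := ![X 0, X 1, 0, X 3, X 4]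
noncomputable abbrev F1v : Fin 5 → R5 := ![X 0, 0, X 2, X 3, X 4]
noncomputable abbrev F12v : Fin 5 → R5 := ![X 0, 0, 0, X 3, X 4]

lemma hF4o : ∀ j, j ≠ 4 → F4v j = X j := by
  intro j hj; fin_cases j <;> simp_all [F4v]
lemma hF2o : ∀ j, j ≠ 2 → F2v j = X j := by
  intro j hj; fin_cases j <;> simp_all [F2v]
lemma hF1o : ∀ j, j ≠ 1 → F1v j = X j := by
  intro j hj; fin_cases j <;> simp_all [F1v]
lemma hF12o : ∀ j, j ≠ 1 → j ≠ 2 → F12v j = X j := by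
  intro j hj1 hj2; fin_cases j <;> simp_all [F12v]

lemma koszul2 (p2 p3 : R5) (h : -(X 1) * p2 + X 0 * p3 = 0) :
    ∃ r, p2 = X 0 * r ∧ p3 = X 1 * r := by
  obtain ⟨r, hr0⟩ := divX 1 F1v (by simp [F1v]) hF1o p3
  have h1 := congrArg (aeval F1v) h
  simp only [map_add, map_neg, _root_.map_mul, aeval_X, map_zero] at h1
  rw [hF1o 0 (by decide), show F1v 1 = 0 by simp [F1v]] at h1
  have hev : aeval F1v p3 = 0 := cancelX 0 (by linear_combination h1)
  have hp3 : p3 = X 1 * r := by linear_combination hr0 + hev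
  have h2 : X 1 * (X 0 * r - p2) = 0 := by linear_combination h - X 0 * hp3
  exact ⟨r, by linear_combination -(cancelX 1 h2), hp3⟩

lemma koszul3 (p1 p2 p3 : R5) (h : X 2 * p1 - X 1 * p2 + X 0 * p3 = 0) :
    ∃ t2 t3 r, p1 = X 1 * t2 - X 0 * t3 ∧ p2 = X 2 * t2 + X 0 * r ∧ p3 = X 2 * t3 + X 1 * r := by
  obtain ⟨t2, ht2⟩ := divX 2 F2v (by simp [F2v]) hF2o p2
  obtain ⟨t3, ht3⟩ := divX 2 F2v (by simp [F2v]) hF2o p3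
  have h1 := congrArg (aeval F2v) h
  simp only [map_add, map_sub, _root_.map_mul, aeval_X, map_zero] at h1
  rw [hF2o 0 (by decide), hF2o 1 (by decide), show F2v 2 = 0 by simp [F2v]] at h1
  have F2eq : -(X 1) * aeval F2v p2 + X 0 * aeval F2v p3 = 0 := by linear_combination h1
  obtain ⟨r, hr2, hr3⟩ := koszul2 _ _ F2eq
  have hc : X 2 * (p1 - X 1 * t2 + X 0 * t3) = 0 := by
    linear_combination h + X 1 * ht2 - X 0 * ht3 - F2eq
  refine ⟨t2, t3, r, by linear_combination cancelX 2 hc, by linear_combination ht2 + hr2,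
    by linear_combination ht3 + hr3⟩

lemma koszul4 (p0 p1 p2 p3 : R5) (h : X 4 * p0 + X 2 * p1 - X 1 * p2 + X 0 * p3 = 0) :
    ∃ s1 s2 s3 t2 t3 r,
      p0 = -(X 2) * s1 + X 1 * s2 - X 0 * s3 ∧
      p1 = X 4 * s1 + X 1 * t2 - X 0 * t3 ∧
      p2 = X 4 * s2 + X 2 * t2 + X 0 * r ∧
      p3 = X 4 * s3 + X 2 * t3 + X 1 * r := by
  obtain ⟨s1, hs1⟩ := divX 4 F4v (by simp [F4v]) hF4o p1
  obtain ⟨s2, hs2⟩ := divX 4 F4v (by simp [F4v]) hF4o p2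
  obtain ⟨s3, hs3⟩ := divX 4 F4v (by simp [F4v]) hF4o p3
  have h1 := congrArg (aeval F4v) h
  simp only [map_add, map_sub, _root_.map_mul, aeval_X, map_zero] at h1
  rw [hF4o 0 (by decide), hF4o 1 (by decide), hF4o 2 (by decide),
    show F4v 4 = 0 by simp [F4v]] at h1
  have F1eq : X 2 * aeval F4v p1 - X 1 * aeval F4v p2 + X 0 * aeval F4v p3 = 0 := by
    linear_combination h1
  obtain ⟨t2, t3, r, hq1, hq2, hq3⟩ := koszul3 _ _ _ F1eq
  have h4 : X 4 * (p0 + X 2 * s1 - X 1 * s2 + X 0 * s3) = 0 := by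
    linear_combination h - F1eq - X 2 * hs1 + X 1 * hs2 - X 0 * hs3
  exact ⟨s1, s2, s3, t2, t3, r, by linear_combination cancelX 4 h4,
    by linear_combination hs1 + hq1, by linear_combination hs2 + hq2,
    by linear_combination hs3 + hq3⟩

lemma hne : (X 3 * X 4 - (X 0 : R5) ^ 2) ≠ 0 := by
  intro h
  have h2 := congrArg (eval (![0, 0, 0, 1, 1] : Fin 5 → ℂ)) h
  simp at h2

lemma step4 (s c0 c1 : R5) (h : X 2 * c0 - X 1 * c1 + s * (X 3 * X 4 - X 0 ^ 2) = 0) :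
    ∃ β γ, s = X 1 * β + X 2 * γ := by
  have h1 := congrArg (aeval F12v) h
  simp only [map_add, map_sub, _root_.map_mul, map_pow, aeval_X, map_zero] at h1
  rw [hF12o 0 (by decide) (by decide), hF12o 3 (by decide) (by decide),
    hF12o 4 (by decide) (by decide), show F12v 1 = 0 by simp [F12v],
    show F12v 2 = 0 by simp [F12v]] at h1
  have h2 : aeval F12v s * (X 3 * X 4 - X 0 ^ 2) = 0 := by linear_combination h1
  have hev : aeval F12v s = 0 := (mul_eq_zero.mp h2).resolve_right hne
  obtain ⟨β, γ, hb⟩ := div2 1 2 F12v (by simp [F12v]) (by simp [F12v]) hF12o s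
  exact ⟨β, γ, by linear_combination hb + hev⟩

lemma step6 (W0 W1 : R5) (h : X 2 * W0 - X 1 * W1 = 0) :
    ∃ t, W0 = X 1 * t ∧ W1 = X 2 * t := by
  obtain ⟨t, ht⟩ := divX 1 F1v (by simp [F1v]) hF1o W0
  have h1 := congrArg (aeval F1v) h
  simp only [map_sub, _root_.map_mul, aeval_X, map_zero] at h1
  rw [hF1o 2 (by decide), show F1v 1 = 0 by simp [F1v]] at h1
  have hev : aeval F1v W0 = 0 := cancelX 2 (by linear_combination h1)
  have hW0 : W0 = X 1 * t := by linear_combination ht + hev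
  have h2 : X 1 * (X 2 * t - W1) = 0 := by linear_combination h - X 2 * hW0
  exact ⟨t, hW0, by linear_combination -(cancelX 1 h2)⟩

lemma mainX (v : Fin 6 → R5)
    (E1 : X 2 * v 0 - X 1 * v 1 + X 0 * v 2 + X 3 * v 5 = 0)
    (E2 : X 4 * v 2 + X 2 * v 3 - X 1 * v 4 + X 0 * v 5 = 0) :
    ∃ u0 u1 u2 u3 u4 u5 : R5,
      v 0 = X 3 * u1 + X 0 * u4 + X 1 * u5 ∧
      v 1 = -(X 3) * u0 - X 0 * u3 + X 2 * u5 ∧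
      v 2 = -(X 1) * u3 - X 2 * u4 ∧
      v 3 = X 0 * u1 + X 1 * u2 + X 4 * u4 ∧
      v 4 = -(X 0) * u0 + X 2 * u2 - X 4 * u3 ∧
      v 5 = -(X 1) * u0 - X 2 * u1 := by
  obtain ⟨s1, s2, s3, t2, t3, r, hv2, hv3, hv4, hv5⟩ := koszul4 _ _ _ _ E2
  have hG1 : X 2 * (v 0 - X 0 * s1 + X 3 * t3) - X 1 * (v 1 - X 0 * s2 - X 3 * r)
      + s3 * (X 3 * X 4 - X 0 ^ 2) = 0 := by
    linear_combination E1 - X 0 * hv2 - X 3 * hv5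
  obtain ⟨β, γ, hbg⟩ := step4 _ _ _ hG1
  have hG2 : X 2 * (v 0 - X 0 * s1 + X 3 * t3 + γ * (X 3 * X 4 - X 0 ^ 2))
      - X 1 * (v 1 - X 0 * s2 - X 3 * r - β * (X 3 * X 4 - X 0 ^ 2)) = 0 := by
    linear_combination hG1 - (X 3 * X 4 - X 0 ^ 2) * hbg
  obtain ⟨t, hW0, hW1⟩ := step6 _ _ hG2
  refine ⟨-r - X 4 * β, -t3 - X 4 * γ, t2, -s2 + X 0 * β, s1 + X 0 * γ, t,
    by linear_combination hW0, by linear_combination hW1,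
    by linear_combination hv2 - X 0 * hbg, by linear_combination hv3,
    by linear_combination hv4, by linear_combination hv5 + X 4 * hbg⟩

end Stmt12Aux

namespace Stmt12Aux
lemma single_of_degree_one (d : Fin 5 →₀ ℕ) (hd : Finsupp.degree d = 1) :
    ∃ j, d = Finsupp.single j 1 := by
  have hcard : d.support.card ≤ 1 := by
    calc d.support.card = ∑ _i ∈ d.support, 1 := by simp
      _ ≤ ∑ i ∈ d.support, d i :=
          Finset.sum_le_sum fun i hi => Nat.one_le_iff_ne_zero.mpr (Finsupp.mem_support_iff.mp hi)
      _ = 1 := hd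
  rcases Nat.le_one_iff_eq_zero_or_eq_one.mp hcard with h | h
  · exfalso
    rw [Finset.card_eq_zero, Finsupp.support_eq_empty] at h
    rw [h, map_zero] at hd
    exact one_ne_zero hd.symm
  · obtain ⟨a, ha, hda⟩ := Finsupp.card_support_eq_one.mp h
    have hsupp : d.support = {a} := by
      rw [hda]; exact Finsupp.support_single_ne_zero a ha
    have : d a = 1 := by
      change ∑ i ∈ d.support, d i = 1 at hd
      rw [hsupp, Finset.sum_singleton] at hd; exact hd
    exact ⟨a, by rw [hda, this]⟩

lemma homog_one_rep (p : R5) (hp : p.IsHomogeneous 1) :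
    p = ∑ j : Fin 5, C (coeff (Finsupp.single j 1) p) * X j := by
  apply MvPolynomial.ext
  intro d
  rw [MvPolynomial.coeff_sum]
  by_cases hd : ∃ j, d = Finsupp.single j 1
  · obtain ⟨j, rfl⟩ := hd
    rw [Finset.sum_eq_single j]
    · rw [coeff_C_mul, coeff_X', if_pos rfl, mul_one]
    · intro k _ hk
      rw [coeff_C_mul, coeff_X',
        if_neg (fun h => hk (Finsupp.single_left_injective one_ne_zero h)), mul_zero]
    · intro h; exact absurd (Finset.mem_univ j) h
  · push_neg at hd
    have h0 : coeff d p = 0 := by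
      by_contra hc
      obtain ⟨j, hj⟩ := single_of_degree_one d
        (by rw [Finsupp.degree_eq_weight_one]; exact hp hc)
      exact hd j hj
    rw [h0]
    symm
    apply Finset.sum_eq_zero
    intro j _
    rw [coeff_C_mul, coeff_X', if_neg (fun h => hd j h.symm), mul_zero]

lemma aeval_C_sum (φ : R5 →ₐ[ℂ] R5) (c : Fin 5 → ℂ) :
    φ (∑ j : Fin 5, C (c j) * X j) = ∑ j : Fin 5, C (c j) * φ (X j) := by
  rw [map_sum]
  refine Finset.sum_congr rfl fun j _ => ?_
  rw [_root_.map_mul]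
  congr 1
  simpa [MvPolynomial.algebraMap_eq] using φ.commutes (c j)

lemma sum_C_matmul (A B : Matrix (Fin 5) (Fin 5) ℂ) (i : Fin 5) :
    ∑ j : Fin 5, C (A i j) * ∑ k : Fin 5, C (B j k) * X k
      = ∑ k : Fin 5, C ((A * B) i k) * (X k : R5) := by
  simp_rw [Finset.mul_sum, ← mul_assoc, ← C_mul]
  rw [Finset.sum_comm]
  simp_rw [← Finset.sum_mul, ← map_sum, ← Matrix.mul_apply]

lemma sum_C_one (i : Fin 5) :
    ∑ k : Fin 5, C ((1 : Matrix (Fin 5) (Fin 5) ℂ) i k) * (X k : R5) = X i := by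
  simp [Matrix.one_apply, apply_ite (C : ℂ → R5)]



lemma mulVec_algHom (φ : R5 →ₐ[ℂ] R5) {k n : ℕ} (A : Matrix (Fin k) (Fin n) R5) (x : Fin n → R5) :
    (A.map φ).mulVec (fun j => φ (x j)) = fun i => φ (A.mulVec x i) := by
  funext i
  simp [Matrix.mulVec, dotProduct, map_sum, _root_.map_mul, Matrix.map_apply]

end Stmt12Aux
namespace Stmt12Aux

lemma exists_equiv (lv : Fin 5 → R5) (hlh : ∀ i, (lv i).IsHomogeneous 1)
    (hind : LinearIndependent ℂ lv) :
    ∃ σh τh : R5 →ₐ[ℂ] R5,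
      (∀ i, σh (X i) = lv i) ∧ (∀ i, τh (lv i) = X i) ∧ (∀ p, σh (τh p) = p) := by
  classical
  set mm : Matrix (Fin 5) (Fin 5) ℂ :=
    Matrix.of fun i j => coeff (Finsupp.single j 1) (lv i) with hmm
  have hrep : ∀ i, lv i = ∑ j : Fin 5, C (mm i j) * X j := fun i => homog_one_rep _ (hlh i)
  have hker : ∀ g : Fin 5 → ℂ, g ᵥ* mm = 0 → g = 0 := by
    intro g hg
    have h0 : ∑ i : Fin 5, g i • lv i = 0 := by
      have h1 : ∑ i : Fin 5, g i • lv i = ∑ k : Fin 5, C ((g ᵥ* mm) k) * X k := by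
        simp_rw [hrep, Finset.smul_sum, MvPolynomial.smul_eq_C_mul, ← mul_assoc, ← C_mul]
        rw [Finset.sum_comm]
        simp_rw [← Finset.sum_mul, ← map_sum]
        simp [Matrix.vecMul, dotProduct]
      rw [h1, hg]; simp
    funext i
    exact Fintype.linearIndependent_iff.mp hind g h0 i
  have hunit : IsUnit mm := by
    rw [← Matrix.vecMul_injective_iff_isUnit]
    intro g g' hgg
    have hgg' : g ᵥ* mm = g' ᵥ* mm := hgg
    have hz : (g - g') ᵥ* mm = 0 := by rw [Matrix.sub_vecMul, hgg', sub_self]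
    exact sub_eq_zero.mp (hker _ hz)
  have hdet : IsUnit mm.det := (Matrix.isUnit_iff_isUnit_det mm).mp hunit
  set nn := mm⁻¹ with hnn
  have hmn : mm * nn = 1 := Matrix.mul_nonsing_inv mm hdet
  have hnm : nn * mm = 1 := Matrix.nonsing_inv_mul mm hdet
  refine ⟨aeval lv, aeval (fun i => ∑ j : Fin 5, C (nn i j) * X j), fun i => aeval_X _ _,
    ?_, ?_⟩
  · intro i
    rw [hrep i, aeval_C_sum]
    simp_rw [aeval_X]
    rw [sum_C_matmul, hmn, sum_C_one]
  · have hc : (aeval lv).comp (aeval (fun i => ∑ j : Fin 5, C (nn i j) * X j))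
        = AlgHom.id ℂ R5 := by
      apply MvPolynomial.algHom_ext
      intro i
      rw [AlgHom.comp_apply, AlgHom.id_apply, aeval_X, aeval_C_sum]
      simp_rw [aeval_X, hrep]
      rw [sum_C_matmul, hnm, sum_C_one]
    intro p; exact DFunLike.congr_fun hc p

end Stmt12Aux

set_option maxHeartbeats 4000000 in
open Stmt12Aux in
theorem stmt_12 (l₀ l₁ l₂ l₃ l₄ : MvPolynomial (Fin 5) ℂ)
    (h₀ : l₀.IsHomogeneous 1) (h₁ : l₁.IsHomogeneous 1) (h₂ : l₂.IsHomogeneous 1)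
    (h₃ : l₃.IsHomogeneous 1) (h₄ : l₄.IsHomogeneous 1)
    (hind : LinearIndependent ℂ ![l₀, l₁, l₂, l₃, l₄]) :
    LinearMap.ker
        (Matrix.mulVecLin
          (!![l₂, -l₁, l₀, 0, 0, l₃;
              0, 0, l₄, l₂, -l₁, l₀] : Matrix (Fin 2) (Fin 6) (MvPolynomial (Fin 5) ℂ))) =
      Submodule.span (MvPolynomial (Fin 5) ℂ)
        (Set.range fun j i =>
          (!![0, l₃, 0, 0, l₀, l₁;
              -l₃, 0, 0, -l₀, 0, l₂;
              0, 0, 0, -l₁, -l₂, 0;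
              0, l₀, l₁, 0, l₄, 0;
              -l₀, 0, l₂, -l₄, 0, 0;
              -l₁, -l₂, 0, 0, 0, 0] : Matrix (Fin 6) (Fin 6) (MvPolynomial (Fin 5) ℂ)) i j) := by
  classical
  set A : Matrix (Fin 2) (Fin 6) R5 :=
    !![l₂, -l₁, l₀, 0, 0, l₃; 0, 0, l₄, l₂, -l₁, l₀] with hA
  set B : Matrix (Fin 6) (Fin 6) R5 :=
    !![0, l₃, 0, 0, l₀, l₁; -l₃, 0, 0, -l₀, 0, l₂; 0, 0, 0, -l₁, -l₂, 0;
       0, l₀, l₁, 0, l₄, 0; -l₀, 0, l₂, -l₄, 0, 0; -l₁, -l₂, 0, 0, 0, 0] with hB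
  have hspan : Submodule.span R5 (Set.range fun j i => B i j)
      = LinearMap.range B.mulVecLin := (Matrix.range_mulVecLin B).symm
  rw [hspan]
  obtain ⟨σh, τh, hσX, hτl, hστ⟩ := exists_equiv ![l₀, l₁, l₂, l₃, l₄]
    (by intro i; fin_cases i <;> simpa) hind
  apply le_antisymm
  · intro v hv
    rw [LinearMap.mem_ker, Matrix.mulVecLin_apply] at hv
    have e0 : τh l₀ = X 0 := hτl 0
    have e1 : τh l₁ = X 1 := hτl 1
    have e2 : τh l₂ = X 2 := hτl 2
    have e3 : τh l₃ = X 3 := hτl 3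
    have e4 : τh l₄ = X 4 := hτl 4
    have f0 : σh (X 0) = l₀ := hσX 0
    have f1 : σh (X 1) = l₁ := hσX 1
    have f2 : σh (X 2) = l₂ := hσX 2
    have f3 : σh (X 3) = l₃ := hσX 3
    have f4 : σh (X 4) = l₄ := hσX 4
    have hv0 := congrFun hv 0
    have hv1 := congrFun hv 1
    simp [hA, v6_4, v6_5, Matrix.vecHead, Matrix.vecTail,
      show (Fin.succ 2 : Fin 6) = 3 from rfl, show ((Fin.succ 2).succ : Fin 6) = 4 from rfl,
      show ((Fin.succ 2).succ.succ : Fin 6) = 5 from rfl] at hv0 hv1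
    have E1 : X 2 * τh (v 0) - X 1 * τh (v 1) + X 0 * τh (v 2) + X 3 * τh (v 5) = 0 := by
      have h2 := congrArg τh hv0
      simp only [map_add, map_sub, map_neg, _root_.map_mul, map_zero, e0, e1, e2, e3, e4] at h2
      linear_combination h2
    have E2 : X 4 * τh (v 2) + X 2 * τh (v 3) - X 1 * τh (v 4) + X 0 * τh (v 5) = 0 := by
      have h2 := congrArg τh hv1
      simp only [map_add, map_sub, map_neg, _root_.map_mul, map_zero, e0, e1, e2, e3, e4] at h2
      linear_combination h2
    obtain ⟨u0, u1, u2, u3, u4, u5, g0, g1, g2, g3, g4, g5⟩ :=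
      mainX (fun i => τh (v i)) E1 E2
    rw [LinearMap.mem_range]
    have sg0 : v 0 = l₃ * σh u1 + l₀ * σh u4 + l₁ * σh u5 := by
      have h2 := congrArg σh g0
      rw [hστ] at h2
      simp only [map_add, map_sub, map_neg, _root_.map_mul, f0, f1, f2, f3, f4] at h2
      linear_combination h2
    have sg1 : v 1 = -(l₃ * σh u0) - l₀ * σh u3 + l₂ * σh u5 := by
      have h2 := congrArg σh g1
      rw [hστ] at h2
      simp only [map_add, map_sub, map_neg, _root_.map_mul, f0, f1, f2, f3, f4] at h2
      linear_combination h2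
    have sg2 : v 2 = -(l₁ * σh u3) - l₂ * σh u4 := by
      have h2 := congrArg σh g2
      rw [hστ] at h2
      simp only [map_add, map_sub, map_neg, _root_.map_mul, f0, f1, f2, f3, f4] at h2
      linear_combination h2
    have sg3 : v 3 = l₀ * σh u1 + l₁ * σh u2 + l₄ * σh u4 := by
      have h2 := congrArg σh g3
      rw [hστ] at h2
      simp only [map_add, map_sub, map_neg, _root_.map_mul, f0, f1, f2, f3, f4] at h2
      linear_combination h2
    have sg4 : v 4 = -(l₀ * σh u0) + l₂ * σh u2 - l₄ * σh u3 := by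
      have h2 := congrArg σh g4
      rw [hστ] at h2
      simp only [map_add, map_sub, map_neg, _root_.map_mul, f0, f1, f2, f3, f4] at h2
      linear_combination h2
    have sg5 : v 5 = -(l₁ * σh u0) - l₂ * σh u1 := by
      have h2 := congrArg σh g5
      rw [hστ] at h2
      simp only [map_add, map_sub, map_neg, _root_.map_mul, f0, f1, f2, f3, f4] at h2
      linear_combination h2
    refine ⟨fun j => σh (![u0, u1, u2, u3, u4, u5] j), ?_⟩
    rw [Matrix.mulVecLin_apply]
    funext i
    fin_cases i
    · simp [hB, v6_4, v6_5, Matrix.vecHead, Matrix.vecTail]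
      linear_combination -sg0
    · simp [hB, v6_4, v6_5, Matrix.vecHead, Matrix.vecTail]
      linear_combination -sg1
    · simp [hB, v6_4, v6_5, Matrix.vecHead, Matrix.vecTail]
      linear_combination -sg2
    · simp [hB, v6_4, v6_5, Matrix.vecHead, Matrix.vecTail]
      linear_combination -sg3
    · simp [hB, v6_4, v6_5, Matrix.vecHead, Matrix.vecTail]
      linear_combination -sg4
    · simp [hB, v6_4, v6_5, Matrix.vecHead, Matrix.vecTail]
      linear_combination -sg5
  · rintro x hx
    rw [LinearMap.mem_range] at hx
    obtain ⟨u, rfl⟩ := hx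
    rw [LinearMap.mem_ker, Matrix.mulVecLin_apply, Matrix.mulVecLin_apply,
      Matrix.mulVec_mulVec]
    have hAB : A * B = 0 := by
      funext i j
      fin_cases i <;> fin_cases j <;>
        · simp [hA, hB, Matrix.mul_apply, Fin.sum_univ_six, cs1, cs2, cs3, cs4, cs5,
            Matrix.vecHead, Matrix.vecTail]
          try ring
    rw [hAB, Matrix.zero_mulVec]
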